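/- arXiv:2404.06068 — 2 statements merged into one kernel-verified Lean document; each statement's English description precedes it below -/
import Mathlib

section
/- Let ℓ > 0, let R = [a, a+ℓ] × [b, b+ℓ] be an axis-aligned square in ℝ², and let TL(R) = [a−2ℓ, a+3ℓ] × [b−2ℓ, b+3ℓ]. Let S be a finite set of points in ℝ² with S ∩ R ≠ ∅. Then for every point q ∈ R and every s ∈ S, the following are equivalent: (i) q lies in the Voronoi region of s with respect to S, i.e., dist(q, s) ≤ dist(q, t) for all t ∈ S; (ii) s ∈ TL(R) and dist(q, s) ≤ dist(q, t) for all t ∈ S ∩ TL(R). In other words, the Voronoi diagram of S within R is determined by the points of S in TL(R). -/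
/-- The Euclidean plane. -/
abbrev E2 := EuclideanSpace ℝ (Fin 2)

/-- The closed axis-aligned square `[a, a+ℓ] × [b, b+ℓ]`. -/
def square (a b ℓ : ℝ) : Set E2 :=
  {p | p 0 ∈ Set.Icc a (a + ℓ) ∧ p 1 ∈ Set.Icc b (b + ℓ)}

/-- For the square `R = [a, a+ℓ] × [b, b+ℓ]`, the concentric square
`TL(R) = [a−2ℓ, a+3ℓ] × [b−2ℓ, b+3ℓ]` of side `5ℓ`. -/
def TL (a b ℓ : ℝ) : Set E2 := square (a - 2*ℓ) (b - 2*ℓ) (5*ℓ)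

lemma coord_le_dist (x y : E2) (i : Fin 2) : |x i - y i| ≤ dist x y := by
  rw [EuclideanSpace.dist_eq, ← Real.sqrt_sq_eq_abs]
  apply Real.sqrt_le_sqrt
  calc (x i - y i) ^ 2 = dist (x i) (y i) ^ 2 := by rw [Real.dist_eq, sq_abs]
    _ ≤ ∑ j, dist (x j) (y j) ^ 2 :=
      Finset.single_le_sum (f := fun j => dist (x j) (y j) ^ 2) (fun j _ => sq_nonneg _) (Finset.mem_univ i)

lemma dist_le_two (x y : E2) (ℓ : ℝ) (h0 : |x 0 - y 0| ≤ ℓ) (h1 : |x 1 - y 1| ≤ ℓ)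
    (hℓ : 0 ≤ ℓ) : dist x y ≤ 2 * ℓ := by
  rw [EuclideanSpace.dist_eq, Fin.sum_univ_two]
  have e0 : dist (x 0) (y 0) ^ 2 ≤ ℓ ^ 2 := by
    rw [Real.dist_eq]; exact pow_le_pow_left₀ (abs_nonneg _) h0 2
  have e1 : dist (x 1) (y 1) ^ 2 ≤ ℓ ^ 2 := by
    rw [Real.dist_eq]; exact pow_le_pow_left₀ (abs_nonneg _) h1 2
  calc √(dist (x 0) (y 0) ^ 2 + dist (x 1) (y 1) ^ 2) ≤ √((2*ℓ)^2) := by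
        apply Real.sqrt_le_sqrt; nlinarith
    _ = 2 * ℓ := Real.sqrt_sq (by linarith)

theorem stmt_3 (ℓ a b : ℝ) (hℓ : 0 < ℓ) (S : Finset E2)
    (hSR : ∃ p ∈ S, p ∈ square a b ℓ) (q : E2) (hq : q ∈ square a b ℓ)
    (s : E2) (hs : s ∈ S) :
    (∀ t ∈ S, dist q s ≤ dist q t) ↔
      (s ∈ TL a b ℓ ∧ ∀ t ∈ S, t ∈ TL a b ℓ → dist q s ≤ dist q t) := by
  obtain ⟨p, hpS, hp⟩ := hSR
  obtain ⟨⟨hq01, hq02⟩, hq11, hq12⟩ := hq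
  obtain ⟨⟨hp01, hp02⟩, hp11, hp12⟩ := hp
  -- dist q p ≤ 2ℓ
  have hqp : dist q p ≤ 2 * ℓ := by
    apply dist_le_two _ _ ℓ _ _ hℓ.le <;> rw [abs_sub_le_iff] <;> constructor <;> linarith
  constructor
  · intro h
    refine ⟨?_, fun t ht _ => h t ht⟩
    have hqs : dist q s ≤ 2 * ℓ := le_trans (h p hpS) hqp
    have h0 := le_trans (coord_le_dist q s 0) hqs
    have h1 := le_trans (coord_le_dist q s 1) hqs
    rw [abs_sub_le_iff] at h0 h1
    obtain ⟨h0a, h0b⟩ := h0; obtain ⟨h1a, h1b⟩ := h1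
    exact ⟨⟨by linarith, by linarith⟩, by linarith, by linarith⟩
  · rintro ⟨hsTL, h⟩ t htS
    by_cases htTL : t ∈ TL a b ℓ
    · exact h t htS htTL
    · -- t is far: dist q t > 2ℓ
      have hqs : dist q s ≤ 2 * ℓ := by
        calc dist q s ≤ dist q p := h p hpS ⟨⟨by linarith, by linarith⟩, by linarith, by linarith⟩
          _ ≤ 2 * ℓ := hqp
      have : (2:ℝ) * ℓ ≤ dist q t := by
        simp only [TL, square, Set.mem_setOf_eq, Set.mem_Icc, not_and_or, not_le] at htTL
        have c0 := coord_le_dist q t 0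
        have c1 := coord_le_dist q t 1
        rw [abs_sub_le_iff] at c0 c1
        rcases htTL with (h' | h') | (h' | h')
        all_goals linarith
      linarith
end

section
/- Let ℓ > 0, let R = [a, a+ℓ] × [b, b+ℓ] be an axis-aligned square in ℝ², and let TL(R) = [a−2ℓ, a+3ℓ] × [b−2ℓ, b+3ℓ]. Let S be a finite set of points in ℝ² with S ∩ R ≠ ∅. If q ∈ R and u, v ∈ S are two points both nearest to q in S (i.e., dist(q, u) = dist(q, v) and dist(q, u) ≤ dist(q, t) for all t ∈ S), then both u and v belong to TL(R). (This is the fact that the pairs of points of S whose bisectors support edges of the Voronoi diagram of S within R can be determined from S ∩ TL(R) alone.) -/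
lemma dist_sq (a b ℓ : ℝ) (hℓ : 0 < ℓ) (x y : E2)
    (hx : x ∈ square a b ℓ) (hy : y ∈ square a b ℓ) : dist x y ≤ 2 * ℓ := by
  obtain ⟨⟨hx0, hx0'⟩, hx1, hx1'⟩ := hx
  obtain ⟨⟨hy0, hy0'⟩, hy1, hy1'⟩ := hy
  rw [EuclideanSpace.dist_eq]
  have h0 : |x 0 - y 0| ≤ ℓ := abs_sub_le_iff.2 ⟨by linarith, by linarith⟩
  have h1 : |x 1 - y 1| ≤ ℓ := abs_sub_le_iff.2 ⟨by linarith, by linarith⟩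
  have hsum : ∑ i, dist (x i) (y i) ^ 2 ≤ (2 * ℓ) ^ 2 := by
    rw [Fin.sum_univ_two]
    have e0 : dist (x 0) (y 0) ^ 2 ≤ ℓ ^ 2 := by
      rw [Real.dist_eq]; exact pow_le_pow_left₀ (abs_nonneg _) h0 2
    have e1 : dist (x 1) (y 1) ^ 2 ≤ ℓ ^ 2 := by
      rw [Real.dist_eq]; exact pow_le_pow_left₀ (abs_nonneg _) h1 2
    nlinarith
  calc Real.sqrt (∑ i, dist (x i) (y i) ^ 2) ≤ Real.sqrt ((2 * ℓ) ^ 2) :=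
        Real.sqrt_le_sqrt hsum
    _ = 2 * ℓ := Real.sqrt_sq (by linarith)

lemma mem_TL (a b ℓ : ℝ) (hℓ : 0 < ℓ) (q w : E2) (hq : q ∈ square a b ℓ)
    (hd : dist q w ≤ 2 * ℓ) : w ∈ TL a b ℓ := by
  obtain ⟨⟨hq0, hq0'⟩, hq1, hq1'⟩ := hq
  have h0 := coord_le_dist q w 0
  have h1 := coord_le_dist q w 1
  have a0 := abs_sub_le_iff.1 h0
  have a1 := abs_sub_le_iff.1 h1
  exact ⟨⟨by linarith [a0.1, a0.2], by linarith [a0.1, a0.2]⟩,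
    ⟨by linarith [a1.1, a1.2], by linarith [a1.1, a1.2]⟩⟩

theorem stmt_4 (ℓ a b : ℝ) (hℓ : 0 < ℓ) (S : Finset E2)
    (hSR : ∃ p ∈ S, p ∈ square a b ℓ) (q : E2) (hq : q ∈ square a b ℓ)
    (u v : E2) (hu : u ∈ S) (hv : v ∈ S)
    (huv : dist q u = dist q v) (hmin : ∀ t ∈ S, dist q u ≤ dist q t) :
    u ∈ TL a b ℓ ∧ v ∈ TL a b ℓ := by
  obtain ⟨p, hpS, hpR⟩ := hSR
  have hqp : dist q p ≤ 2 * ℓ := dist_sq a b ℓ hℓ q p hq hpR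
  have hqu : dist q u ≤ 2 * ℓ := le_trans (hmin p hpS) hqp
  have hqv : dist q v ≤ 2 * ℓ := huv ▸ hqu
  exact ⟨mem_TL a b ℓ hℓ q u hq hqu, mem_TL a b ℓ hℓ q v hq hqv⟩
end
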